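/- Every operation of a thermal instrument preserves the Gibbs state proportionally: if I = {I_x} is a thermal E-instrument at inverse temperature β, then I_x(τ_β) = tr[E_x τ_β] τ_β for every outcome x, where τ_β is the Gibbs state of the system Hamiltonian H_S. -/

import Mathlib

open Matrix Kronecker ComplexOrder

/-- Completely positive map, via Kraus representation (equivalent in finite dimension). -/
def IsCP {d : Type*} [Fintype d] [DecidableEq d]
    (Φ : Matrix d d ℂ → Matrix d d ℂ) : Prop :=
  ∃ (m : ℕ) (K : Fin m → Matrix d d ℂ), ∀ A, Φ A = ∑ i, K i * A * (K i)ᴴ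

/-- Trace-preserving map. -/
def IsTP {d : Type*} [Fintype d] [DecidableEq d]
    (Φ : Matrix d d ℂ → Matrix d d ℂ) : Prop :=
  ∀ A, (Φ A).trace = A.trace

/-- Unital map. -/
def IsUnital {d : Type*} [Fintype d] [DecidableEq d]
    (Φ : Matrix d d ℂ → Matrix d d ℂ) : Prop :=
  Φ 1 = 1

/-- `Φd` is the Heisenberg dual of `Φ`, defined by trace duality. -/
def IsDual {d : Type*} [Fintype d] [DecidableEq d]
    (Φ Φd : Matrix d d ℂ → Matrix d d ℂ) : Prop :=
  ∀ A B, (A * Φ B).trace = (Φd A * B).trace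

/-- Gibbs state `e^{-βH}/tr[e^{-βH}]`. -/
noncomputable def gibbs {d : Type*} [Fintype d] [DecidableEq d]
    (H : Matrix d d ℂ) (β : ℝ) : Matrix d d ℂ :=
  ((NormedSpace.exp ((-β : ℂ) • H)).trace)⁻¹ • NormedSpace.exp ((-β : ℂ) • H)

/-- Partial trace over the second (probe) factor. -/
noncomputable def ptraceA {ns na : ℕ}
    (M : Matrix (Fin ns × Fin na) (Fin ns × Fin na) ℂ) : Matrix (Fin ns) (Fin ns) ℂ :=
  fun i j => ∑ k, M (i, k) (j, k)

namespace ThermalAux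


noncomputable def sqn {d : Type*} [Fintype d] (v : d → ℂ) : ℝ := ∑ k, Complex.normSq (v k)

noncomputable def SQ {d e : Type*} [Fintype d] [Fintype e] (M : Matrix d e ℂ) : ℝ :=
  ∑ j, sqn fun k => M k j

lemma sqn_nonneg {d : Type*} [Fintype d] (v : d → ℂ) : 0 ≤ sqn v :=
  Finset.sum_nonneg fun _ _ => Complex.normSq_nonneg _

lemma star_dot_self {d : Type*} [Fintype d] (v : d → ℂ) : star v ⬝ᵥ v = (sqn v : ℂ) := by
  unfold sqn dotProduct
  push_cast
  exact Finset.sum_congr rfl fun k _ => by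
    simp [Complex.normSq_eq_conj_mul_self]

lemma sum_mulVec' {d : Type*} [Fintype d] {m : ℕ} (M : Fin m → Matrix d d ℂ) (v : d → ℂ) :
    (∑ i, M i) *ᵥ v = ∑ i, M i *ᵥ v := by
  ext k
  simp [Matrix.mulVec, dotProduct, Matrix.sum_apply, Finset.sum_mul]
  rw [Finset.sum_comm]

lemma dotProduct_sum' {d : Type*} [Fintype d] {m : ℕ} (v : d → ℂ) (w : Fin m → d → ℂ) :
    v ⬝ᵥ (∑ i, w i) = ∑ i, v ⬝ᵥ w i := by
  simp [dotProduct, Finset.mul_sum]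
  rw [Finset.sum_comm]

lemma ks_vec {d : Type*} [Fintype d] [DecidableEq d] {m : ℕ} (K : Fin m → Matrix d d ℂ)
    (hK : ∑ i, K i * (K i)ᴴ = 1) (w : Fin m → d → ℂ) :
    sqn (∑ i, K i *ᵥ w i) ≤ ∑ i, sqn (w i) := by
  set u : d → ℂ := ∑ i, K i *ᵥ w i with hu
  set p : Fin m → d → ℂ := fun i => (K i)ᴴ *ᵥ u with hp
  have hstarp : ∀ i, star (p i) = star u ᵥ* K i := by
    intro i
    rw [hp]
    rw [Matrix.star_mulVec, Matrix.conjTranspose_conjTranspose]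
  have hA : ∑ i, sqn (p i) = sqn u := by
    have key : ∑ i, (star (p i) ⬝ᵥ p i) = star u ⬝ᵥ u := by
      have h1 : ∀ i, star (p i) ⬝ᵥ p i = star u ⬝ᵥ ((K i * (K i)ᴴ) *ᵥ u) := by
        intro i
        rw [hstarp i, hp, ← dotProduct_mulVec, Matrix.mulVec_mulVec]
      rw [Finset.sum_congr rfl fun i _ => h1 i]
      have h2 : ∑ i, star u ⬝ᵥ ((K i * (K i)ᴴ) *ᵥ u) = star u ⬝ᵥ ((∑ i, K i * (K i)ᴴ) *ᵥ u) := by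
        rw [sum_mulVec', dotProduct_sum']
      rw [h2, hK, Matrix.one_mulVec]
    have := key
    rw [star_dot_self] at this
    have h3 : ∑ i, (star (p i) ⬝ᵥ p i) = ((∑ i, sqn (p i) : ℝ) : ℂ) := by
      push_cast
      exact Finset.sum_congr rfl fun i _ => star_dot_self (p i)
    rw [h3] at this
    exact_mod_cast this
  have hB : (sqn u : ℂ) = ∑ i, star (p i) ⬝ᵥ w i := by
    rw [← star_dot_self]
    calc star u ⬝ᵥ u = star u ⬝ᵥ ∑ i, K i *ᵥ w i := by rw [← hu]
      _ = ∑ i, star u ⬝ᵥ (K i *ᵥ w i) := dotProduct_sum' _ _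
      _ = ∑ i, star (p i) ⬝ᵥ w i := by
          refine Finset.sum_congr rfl fun i _ => ?_
          rw [dotProduct_mulVec, hstarp i]
  have hUnn : 0 ≤ sqn u := sqn_nonneg u
  have hTnn : 0 ≤ ∑ i, sqn (w i) := Finset.sum_nonneg fun _ _ => sqn_nonneg _
  have key : sqn u ≤ Real.sqrt (sqn u) * Real.sqrt (∑ i, sqn (w i)) := by
    have h1 : sqn u = ‖(sqn u : ℂ)‖ := by
      rw [Complex.norm_real, Real.norm_of_nonneg hUnn]
    have h2 : ‖∑ i, star (p i) ⬝ᵥ w i‖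
        ≤ ∑ i, ∑ k, ‖p i k‖ * ‖w i k‖ := by
      refine le_trans (norm_sum_le _ _) (Finset.sum_le_sum fun i _ => ?_)
      unfold dotProduct
      refine le_trans (norm_sum_le _ _) (le_of_eq (Finset.sum_congr rfl fun k _ => ?_))
      simp [norm_mul, Pi.star_apply, Complex.norm_conj]
    have h3 : ∑ i, ∑ k, ‖p i k‖ * ‖w i k‖
        = ∑ x : Fin m × d, ‖p x.1 x.2‖ * ‖w x.1 x.2‖ := by
      rw [Fintype.sum_prod_type]
    have h4 : ∑ x : Fin m × d, ‖p x.1 x.2‖ * ‖w x.1 x.2‖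
        ≤ Real.sqrt (∑ x : Fin m × d, ‖p x.1 x.2‖ ^ 2)
          * Real.sqrt (∑ x : Fin m × d, ‖w x.1 x.2‖ ^ 2) :=
      Real.sum_mul_le_sqrt_mul_sqrt _ _ _
    have h5 : ∑ x : Fin m × d, ‖p x.1 x.2‖ ^ 2 = ∑ i, sqn (p i) := by
      rw [Fintype.sum_prod_type]
      exact Finset.sum_congr rfl fun i _ => Finset.sum_congr rfl fun k _ => Complex.sq_norm _
    have h6 : ∑ x : Fin m × d, ‖w x.1 x.2‖ ^ 2 = ∑ i, sqn (w i) := by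
      rw [Fintype.sum_prod_type]
      exact Finset.sum_congr rfl fun i _ => Finset.sum_congr rfl fun k _ => Complex.sq_norm _
    rw [h5, h6, hA] at h4
    calc sqn u = ‖(sqn u : ℂ)‖ := h1
      _ = ‖∑ i, star (p i) ⬝ᵥ w i‖ := by rw [hB]
      _ ≤ ∑ i, ∑ k, ‖p i k‖ * ‖w i k‖ := h2
      _ = ∑ x : Fin m × d, ‖p x.1 x.2‖ * ‖w x.1 x.2‖ := h3
      _ ≤ Real.sqrt (sqn u) * Real.sqrt (∑ i, sqn (w i)) := h4
  nlinarith [Real.sq_sqrt hUnn, Real.sq_sqrt hTnn, Real.sqrt_nonneg (sqn u),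
    Real.sqrt_nonneg (∑ i, sqn (w i)), key]


lemma SQ_nonneg {d e : Type*} [Fintype d] [Fintype e] (M : Matrix d e ℂ) : 0 ≤ SQ M :=
  Finset.sum_nonneg fun _ _ => sqn_nonneg _

lemma SQ_eq_zero {d e : Type*} [Fintype d] [Fintype e] {M : Matrix d e ℂ} (h : SQ M = 0) :
    M = 0 := by
  ext k j
  have h1 : ∀ j ∈ Finset.univ, (0:ℝ) ≤ sqn fun k => M k j := fun _ _ => sqn_nonneg _
  have h2 := (Finset.sum_eq_zero_iff_of_nonneg h1).mp h j (Finset.mem_univ _)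
  have h3 : ∀ k ∈ Finset.univ, (0:ℝ) ≤ Complex.normSq (M k j) :=
    fun _ _ => Complex.normSq_nonneg _
  have h4 := (Finset.sum_eq_zero_iff_of_nonneg h3).mp h2 k (Finset.mem_univ _)
  simpa using Complex.normSq_eq_zero.mp h4

lemma trace_conjTranspose_mul_self {d : Type*} [Fintype d] (M : Matrix d d ℂ) :
    (Mᴴ * M).trace = (SQ M : ℂ) := by
  unfold SQ sqn Matrix.trace
  push_cast
  refine Finset.sum_congr rfl fun j _ => ?_
  simp only [Matrix.diag_apply, Matrix.mul_apply, Matrix.conjTranspose_apply]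
  exact Finset.sum_congr rfl fun k _ => by simp [Complex.normSq_eq_conj_mul_self]



lemma kraus_contract {d : Type*} [Fintype d] [DecidableEq d] {m : ℕ}
    (K : Fin m → Matrix d d ℂ) (hK : ∑ i, K i * (K i)ᴴ = 1) (A : Matrix d d ℂ)
    (htr : (∑ i, K i * (Aᴴ * A) * (K i)ᴴ).trace = (Aᴴ * A).trace) :
    SQ (∑ i, K i * A * (K i)ᴴ) ≤ SQ A := by
  have hcol : ∀ j, (fun k => (∑ i, K i * A * (K i)ᴴ) k j)
      = ∑ i, K i *ᵥ (fun t => (A * (K i)ᴴ) t j) := by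
    intro j
    funext k
    simp only [Finset.sum_apply, Matrix.sum_apply]
    refine Finset.sum_congr rfl fun i _ => ?_
    rw [Matrix.mul_assoc]
    simp [Matrix.mulVec, dotProduct, Matrix.mul_apply]
  have step1 : SQ (∑ i, K i * A * (K i)ᴴ) ≤ ∑ i, SQ (A * (K i)ᴴ) := by
    unfold SQ
    calc ∑ j, sqn (fun k => (∑ i, K i * A * (K i)ᴴ) k j)
        ≤ ∑ j, ∑ i, sqn (fun t => (A * (K i)ᴴ) t j) := by
          refine Finset.sum_le_sum fun j _ => ?_
          rw [hcol j]
          exact ks_vec K hK _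
      _ = ∑ i, ∑ j, sqn (fun t => (A * (K i)ᴴ) t j) := Finset.sum_comm
  have step2 : ∑ i, SQ (A * (K i)ᴴ) = SQ A := by
    have h1 : ((∑ i, SQ (A * (K i)ᴴ) : ℝ) : ℂ) = ((SQ A : ℝ) : ℂ) := by
      push_cast
      calc (∑ i, (SQ (A * (K i)ᴴ) : ℂ))
          = ∑ i, ((A * (K i)ᴴ)ᴴ * (A * (K i)ᴴ)).trace := by
            exact Finset.sum_congr rfl fun i _ =>
              (trace_conjTranspose_mul_self (A * (K i)ᴴ)).symm
        _ = ∑ i, (K i * (Aᴴ * A) * (K i)ᴴ).trace := by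
            refine Finset.sum_congr rfl fun i _ => ?_
            rw [Matrix.conjTranspose_mul, Matrix.conjTranspose_conjTranspose]
            rw [Matrix.mul_assoc, Matrix.mul_assoc, Matrix.mul_assoc]
        _ = (∑ i, K i * (Aᴴ * A) * (K i)ᴴ).trace := (Matrix.trace_sum _ _).symm
        _ = (Aᴴ * A).trace := htr
        _ = (SQ A : ℂ) := trace_conjTranspose_mul_self A
    exact_mod_cast h1
  rw [step2] at step1
  exact step1

lemma gram {d : Type*} [Fintype d] [DecidableEq d] {m : ℕ}
    (L : Fin m → Matrix d d ℂ) (C : Matrix d d ℂ) (hC : Cᴴ = C)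
    (hL1 : ∑ i, L i * (L i)ᴴ = 1) (hfixC : ∑ i, L i * C * (L i)ᴴ = C) :
    ∑ i, (C * L i - L i * C) * (C * L i - L i * C)ᴴ
      = (∑ i, L i * (C * C) * (L i)ᴴ) - C * C := by
  have hterm : ∀ i, (C * L i - L i * C) * (C * L i - L i * C)ᴴ
      = C * (L i * (L i)ᴴ) * C - C * (L i * C * (L i)ᴴ) - (L i * C * (L i)ᴴ) * C
        + L i * (C * C) * (L i)ᴴ := by
    intro i
    simp only [Matrix.conjTranspose_sub, Matrix.conjTranspose_mul, hC]
    noncomm_ring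
  rw [Finset.sum_congr rfl fun i _ => hterm i]
  rw [Finset.sum_add_distrib, Finset.sum_sub_distrib, Finset.sum_sub_distrib]
  have e1 : ∑ i, C * (L i * (L i)ᴴ) * C = C * C := by
    rw [← Finset.sum_mul, ← Finset.mul_sum, hL1, mul_one]
  have e2 : ∑ i, C * (L i * C * (L i)ᴴ) = C * C := by
    rw [← Finset.mul_sum, hfixC]
  have e3 : ∑ i, (L i * C * (L i)ᴴ) * C = C * C := by
    rw [← Finset.sum_mul, hfixC]
  rw [e1, e2, e3]
  abel

lemma comm_of_fix {d : Type*} [Fintype d] [DecidableEq d] {m : ℕ}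
    (L : Fin m → Matrix d d ℂ) (C : Matrix d d ℂ) (hC : Cᴴ = C)
    (hL1 : ∑ i, L i * (L i)ᴴ = 1) (hfixC : ∑ i, L i * C * (L i)ᴴ = C)
    (htr : (∑ i, L i * (C * C) * (L i)ᴴ).trace = (C * C).trace) :
    ∀ i, C * L i = L i * C := by
  have hg := gram L C hC hL1 hfixC
  have htr0 : (∑ i, (C * L i - L i * C) * (C * L i - L i * C)ᴴ).trace = 0 := by
    rw [hg, Matrix.trace_sub, htr, sub_self]
  rw [Matrix.trace_sum] at htr0
  have hterm : ∀ i, ((C * L i - L i * C) * (C * L i - L i * C)ᴴ).trace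
      = ((SQ (C * L i - L i * C)ᴴ : ℝ) : ℂ) := by
    intro i
    rw [← trace_conjTranspose_mul_self ((C * L i - L i * C)ᴴ),
      Matrix.conjTranspose_conjTranspose]
  rw [Finset.sum_congr rfl fun i _ => hterm i] at htr0
  have htr1 : ∑ i, SQ (C * L i - L i * C)ᴴ = 0 := by
    exact_mod_cast htr0
  intro i
  have h1 : SQ (C * L i - L i * C)ᴴ = 0 :=
    (Finset.sum_eq_zero_iff_of_nonneg fun _ _ => SQ_nonneg _).mp htr1 i (Finset.mem_univ _)
  have h2 := SQ_eq_zero h1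
  have h3 : C * L i - L i * C = 0 := by
    have := congrArg Matrix.conjTranspose h2
    simpa using this
  rw [← sub_eq_zero]
  exact h3



lemma kron_conjTranspose {l m n p : Type*} (A : Matrix l m ℂ) (B : Matrix n p ℂ) :
    (A ⊗ₖ B)ᴴ = Aᴴ ⊗ₖ Bᴴ := by
  ext i j
  simp [Matrix.conjTranspose_apply, Matrix.kroneckerMap_apply, star_mul']

noncomputable def kronLeft (ns na : ℕ) :
    Matrix (Fin ns) (Fin ns) ℂ →ₐ[ℂ] Matrix (Fin ns × Fin na) (Fin ns × Fin na) ℂ where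
  toFun A := A ⊗ₖ (1 : Matrix (Fin na) (Fin na) ℂ)
  map_one' := Matrix.one_kronecker_one
  map_mul' A B := by
    rw [← Matrix.mul_kronecker_mul, one_mul]
  map_zero' := Matrix.zero_kronecker _
  map_add' A B := Matrix.add_kronecker A B 1
  commutes' r := by
    rw [Algebra.algebraMap_eq_smul_one, Algebra.algebraMap_eq_smul_one,
      Matrix.smul_kronecker, Matrix.one_kronecker_one]

noncomputable def kronRight (ns na : ℕ) :
    Matrix (Fin na) (Fin na) ℂ →ₐ[ℂ] Matrix (Fin ns × Fin na) (Fin ns × Fin na) ℂ where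
  toFun B := (1 : Matrix (Fin ns) (Fin ns) ℂ) ⊗ₖ B
  map_one' := Matrix.one_kronecker_one
  map_mul' A B := by
    rw [← Matrix.mul_kronecker_mul, one_mul]
  map_zero' := Matrix.kronecker_zero _
  map_add' A B := Matrix.kronecker_add 1 A B
  commutes' r := by
    rw [Algebra.algebraMap_eq_smul_one, Algebra.algebraMap_eq_smul_one,
      Matrix.kronecker_smul, Matrix.one_kronecker_one]

lemma exp_kron_left {ns na : ℕ} (X : Matrix (Fin ns) (Fin ns) ℂ) :
    NormedSpace.exp (X ⊗ₖ (1 : Matrix (Fin na) (Fin na) ℂ))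
      = NormedSpace.exp X ⊗ₖ (1 : Matrix (Fin na) (Fin na) ℂ) := by
  letI : SeminormedRing (Matrix (Fin ns) (Fin ns) ℂ) := Matrix.linftyOpSemiNormedRing
  letI : NormedRing (Matrix (Fin ns) (Fin ns) ℂ) := Matrix.linftyOpNormedRing
  letI : NormedAlgebra ℂ (Matrix (Fin ns) (Fin ns) ℂ) := Matrix.linftyOpNormedAlgebra
  letI : SeminormedRing (Matrix (Fin ns × Fin na) (Fin ns × Fin na) ℂ) :=
    Matrix.linftyOpSemiNormedRing
  letI : NormedRing (Matrix (Fin ns × Fin na) (Fin ns × Fin na) ℂ) := Matrix.linftyOpNormedRing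
  letI : NormedAlgebra ℂ (Matrix (Fin ns × Fin na) (Fin ns × Fin na) ℂ) :=
    Matrix.linftyOpNormedAlgebra
  letI : NormedAlgebra ℚ (Matrix (Fin ns) (Fin ns) ℂ) := NormedAlgebra.restrictScalars ℚ ℂ _
  letI : NormedAlgebra ℚ (Matrix (Fin ns × Fin na) (Fin ns × Fin na) ℂ) :=
    NormedAlgebra.restrictScalars ℚ ℂ _
  have hf : Continuous (kronLeft ns na) := by
    apply continuous_matrix
    rintro ⟨i1, i2⟩ ⟨j1, j2⟩
    show Continuous fun A : Matrix (Fin ns) (Fin ns) ℂ =>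
      A i1 j1 * (1 : Matrix (Fin na) (Fin na) ℂ) i2 j2
    exact (continuous_id.matrix_elem i1 j1).mul continuous_const
  exact (NormedSpace.map_exp (kronLeft ns na) hf X).symm

lemma exp_kron_right {ns na : ℕ} (Y : Matrix (Fin na) (Fin na) ℂ) :
    NormedSpace.exp ((1 : Matrix (Fin ns) (Fin ns) ℂ) ⊗ₖ Y)
      = (1 : Matrix (Fin ns) (Fin ns) ℂ) ⊗ₖ NormedSpace.exp Y := by
  letI : SeminormedRing (Matrix (Fin na) (Fin na) ℂ) := Matrix.linftyOpSemiNormedRing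
  letI : NormedRing (Matrix (Fin na) (Fin na) ℂ) := Matrix.linftyOpNormedRing
  letI : NormedAlgebra ℂ (Matrix (Fin na) (Fin na) ℂ) := Matrix.linftyOpNormedAlgebra
  letI : SeminormedRing (Matrix (Fin ns × Fin na) (Fin ns × Fin na) ℂ) :=
    Matrix.linftyOpSemiNormedRing
  letI : NormedRing (Matrix (Fin ns × Fin na) (Fin ns × Fin na) ℂ) := Matrix.linftyOpNormedRing
  letI : NormedAlgebra ℂ (Matrix (Fin ns × Fin na) (Fin ns × Fin na) ℂ) :=
    Matrix.linftyOpNormedAlgebra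
  letI : NormedAlgebra ℚ (Matrix (Fin na) (Fin na) ℂ) := NormedAlgebra.restrictScalars ℚ ℂ _
  letI : NormedAlgebra ℚ (Matrix (Fin ns × Fin na) (Fin ns × Fin na) ℂ) :=
    NormedAlgebra.restrictScalars ℚ ℂ _
  have hf : Continuous (kronRight ns na) := by
    apply continuous_matrix
    rintro ⟨i1, i2⟩ ⟨j1, j2⟩
    show Continuous fun B : Matrix (Fin na) (Fin na) ℂ =>
      (1 : Matrix (Fin ns) (Fin ns) ℂ) i1 j1 * B i2 j2
    exact continuous_const.mul (continuous_id.matrix_elem i2 j2)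
  exact (NormedSpace.map_exp (kronRight ns na) hf Y).symm

lemma exp_kron {ns na : ℕ} (X : Matrix (Fin ns) (Fin ns) ℂ) (Y : Matrix (Fin na) (Fin na) ℂ) :
    NormedSpace.exp (X ⊗ₖ (1 : Matrix (Fin na) (Fin na) ℂ)
        + (1 : Matrix (Fin ns) (Fin ns) ℂ) ⊗ₖ Y)
      = NormedSpace.exp X ⊗ₖ NormedSpace.exp Y := by
  have hcomm : Commute (X ⊗ₖ (1 : Matrix (Fin na) (Fin na) ℂ))
      ((1 : Matrix (Fin ns) (Fin ns) ℂ) ⊗ₖ Y) := by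
    show _ = _
    rw [← Matrix.mul_kronecker_mul, ← Matrix.mul_kronecker_mul, one_mul, mul_one, one_mul, mul_one]
  calc NormedSpace.exp (X ⊗ₖ (1 : Matrix (Fin na) (Fin na) ℂ)
        + (1 : Matrix (Fin ns) (Fin ns) ℂ) ⊗ₖ Y)
      = NormedSpace.exp (X ⊗ₖ (1 : Matrix (Fin na) (Fin na) ℂ))
        * NormedSpace.exp ((1 : Matrix (Fin ns) (Fin ns) ℂ) ⊗ₖ Y) :=
        Matrix.exp_add_of_commute _ _ hcomm
    _ = (NormedSpace.exp X ⊗ₖ (1 : Matrix (Fin na) (Fin na) ℂ))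
        * ((1 : Matrix (Fin ns) (Fin ns) ℂ) ⊗ₖ NormedSpace.exp Y) := by
        rw [exp_kron_left, exp_kron_right]
    _ = NormedSpace.exp X ⊗ₖ NormedSpace.exp Y := by
        rw [← Matrix.mul_kronecker_mul, mul_one, one_mul]


end ThermalAux

/-- Every operation of a thermal instrument preserves the Gibbs state
proportionally: `I_x(τ_β) = tr[E_x τ_β] τ_β`, where `tr[E_x τ_β] = tr[I_x(τ_β)]`. -/
theorem thermal_instrument_gibbs_preserving {ns na N : ℕ}
    (HS : Matrix (Fin ns) (Fin ns) ℂ) (hHS : HS.IsHermitian)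
    (HA : Matrix (Fin na) (Fin na) ℂ) (hHA : HA.IsHermitian)
    (β : ℝ) (hβ : 0 < β)
    (E Ed : Matrix (Fin ns × Fin na) (Fin ns × Fin na) ℂ →
            Matrix (Fin ns × Fin na) (Fin ns × Fin na) ℂ)
    (hCP : IsCP E) (hTP : IsTP E) (hU : IsUnital E)
    (hdCP : IsCP Ed) (hdTP : IsTP Ed) (hdU : IsUnital Ed)
    (hDual : IsDual E Ed)
    (hfix : Ed (HS ⊗ₖ 1 + 1 ⊗ₖ HA) = HS ⊗ₖ 1 + 1 ⊗ₖ HA)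
    (Z : Fin N → Matrix (Fin na) (Fin na) ℂ)
    (hZpos : ∀ x, (Z x).PosSemidef) (hZsum : ∑ x, Z x = 1)
    (hYanase : ∀ x, Z x * HA = HA * Z x)
    (Inst : Fin N → Matrix (Fin ns) (Fin ns) ℂ → Matrix (Fin ns) (Fin ns) ℂ)
    (hInst : ∀ x ρ, Inst x ρ = ptraceA ((1 ⊗ₖ Z x) * E (ρ ⊗ₖ gibbs HA β)))
    :
    ∀ x, Inst x (gibbs HS β) = (Inst x (gibbs HS β)).trace • gibbs HS β := by
  intro x
  classical
  set Hj : Matrix (Fin ns × Fin na) (Fin ns × Fin na) ℂ := HS ⊗ₖ 1 + 1 ⊗ₖ HA with hHj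
  set G : Matrix (Fin ns × Fin na) (Fin ns × Fin na) ℂ :=
    NormedSpace.exp ((-β : ℂ) • Hj) with hG
  have hHSe : HSᴴ = HS := hHS
  have hHAe : HAᴴ = HA := hHA
  have hHherm : Hjᴴ = Hj := by
    simp only [hHj, Matrix.conjTranspose_add, ThermalAux.kron_conjTranspose,
      Matrix.conjTranspose_one, hHSe, hHAe]
  have hGsplit : G = NormedSpace.exp ((-β : ℂ) • HS) ⊗ₖ NormedSpace.exp ((-β : ℂ) • HA) := by
    rw [hG, hHj, smul_add, ← Matrix.smul_kronecker, ← Matrix.kronecker_smul]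
    exact ThermalAux.exp_kron _ _
  obtain ⟨mL, L, hL⟩ := hdCP
  have hL1 : ∑ i, L i * (L i)ᴴ = 1 := by
    have h : Ed 1 = 1 := hdU
    rw [hL 1] at h
    simpa [Matrix.mul_one] using h
  have hfixH : ∑ i, L i * Hj * (L i)ᴴ = Hj := by rw [← hL Hj]; exact hfix
  have htrL : (∑ i, L i * (Hj * Hj) * (L i)ᴴ).trace = (Hj * Hj).trace := by
    rw [← hL (Hj * Hj)]; exact hdTP _
  have hcommH : ∀ i, Hj * L i = L i * Hj :=
    ThermalAux.comm_of_fix L Hj hHherm hL1 hfixH htrL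
  have hEdG : Ed G = G := by
    rw [hL G]
    have hterm : ∀ i : Fin mL, L i * G * (L i)ᴴ = G * (L i * (L i)ᴴ) := by
      intro i
      have hc : Commute (L i) G := by
        have h1 : Commute (L i) Hj := (hcommH i).symm
        exact (h1.smul_right ((-β : ℂ))).exp_right
      rw [show L i * G = G * L i from hc, Matrix.mul_assoc]
    rw [Finset.sum_congr rfl fun i _ => hterm i, ← Finset.mul_sum, hL1, mul_one]
  have hEdGH : Ed Gᴴ = Gᴴ := by
    have h1 : Ed Gᴴ = (Ed G)ᴴ := by
      rw [hL Gᴴ, hL G, Matrix.conjTranspose_sum]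
      exact Finset.sum_congr rfl fun i _ => by
        simp [Matrix.conjTranspose_mul, Matrix.conjTranspose_conjTranspose, Matrix.mul_assoc]
    rw [h1, hEdG]
  obtain ⟨mK, K, hK⟩ := hCP
  have hK1 : ∑ i, K i * (K i)ᴴ = 1 := by
    have h : E 1 = 1 := hU
    rw [hK 1] at h
    simpa [Matrix.mul_one] using h
  have hcontr : ThermalAux.SQ (E G) ≤ ThermalAux.SQ G := by
    have htr : (∑ i, K i * (Gᴴ * G) * (K i)ᴴ).trace = (Gᴴ * G).trace := by
      rw [← hK (Gᴴ * G)]; exact hTP _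
    have h := ThermalAux.kraus_contract K hK1 G htr
    rw [← hK G] at h
    exact h
  have h1 : (Gᴴ * E G).trace = ((ThermalAux.SQ G : ℝ) : ℂ) := by
    have hd : (Gᴴ * E G).trace = (Ed Gᴴ * G).trace := hDual Gᴴ G
    rw [hd, hEdGH, ThermalAux.trace_conjTranspose_mul_self]
  have h2 : ((E G)ᴴ * G).trace = ((ThermalAux.SQ G : ℝ) : ℂ) := by
    have he : (E G)ᴴ * G = (Gᴴ * E G)ᴴ := by
      rw [Matrix.conjTranspose_mul, Matrix.conjTranspose_conjTranspose]
    rw [he, Matrix.trace_conjTranspose, h1]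
    simp
  have hEG : E G = G := by
    have hDexp : ((E G - G)ᴴ * (E G - G)).trace
        = ((ThermalAux.SQ (E G) : ℝ) : ℂ) - ((ThermalAux.SQ G : ℝ) : ℂ) := by
      rw [Matrix.conjTranspose_sub, Matrix.sub_mul, Matrix.mul_sub, Matrix.mul_sub,
        Matrix.trace_sub, Matrix.trace_sub, Matrix.trace_sub,
        ThermalAux.trace_conjTranspose_mul_self, ThermalAux.trace_conjTranspose_mul_self, h1, h2]
      ring
    have hDreal : ThermalAux.SQ (E G - G) = ThermalAux.SQ (E G) - ThermalAux.SQ G := by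
      have h3 := ThermalAux.trace_conjTranspose_mul_self (E G - G)
      rw [hDexp] at h3
      exact_mod_cast h3.symm
    have h0 : ThermalAux.SQ (E G - G) = 0 :=
      le_antisymm (by rw [hDreal]; linarith) (ThermalAux.SQ_nonneg _)
    have h4 := ThermalAux.SQ_eq_zero h0
    rwa [sub_eq_zero] at h4
  have hEsmul : ∀ (c : ℂ) (M : Matrix (Fin ns × Fin na) (Fin ns × Fin na) ℂ),
      E (c • M) = c • E M := by
    intro c M
    rw [hK (c • M), hK M, Finset.smul_sum]
    exact Finset.sum_congr rfl fun i _ => by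
      rw [Matrix.mul_smul, Matrix.smul_mul]
  have hEfix : E (gibbs HS β ⊗ₖ gibbs HA β) = gibbs HS β ⊗ₖ gibbs HA β := by
    have hg : gibbs HS β ⊗ₖ gibbs HA β
        = (NormedSpace.exp ((-β : ℂ) • HS)).trace⁻¹ •
          ((NormedSpace.exp ((-β : ℂ) • HA)).trace⁻¹ • G) := by
      simp only [gibbs]
      rw [Matrix.smul_kronecker, Matrix.kronecker_smul, ← hGsplit]
    rw [hg, hEsmul, hEsmul, hEG]
  have hinst := hInst x (gibbs HS β)
  rw [hEfix] at hinst
  have hkron : (1 ⊗ₖ Z x) * (gibbs HS β ⊗ₖ gibbs HA β)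
      = gibbs HS β ⊗ₖ (Z x * gibbs HA β) := by
    rw [← Matrix.mul_kronecker_mul, one_mul]
  have hpt : ptraceA (gibbs HS β ⊗ₖ (Z x * gibbs HA β))
      = (Z x * gibbs HA β).trace • gibbs HS β := by
    ext i j
    simp only [ptraceA, Matrix.smul_apply, Matrix.kroneckerMap_apply, Matrix.trace,
      Matrix.diag_apply, smul_eq_mul]
    rw [Finset.sum_mul]
    exact Finset.sum_congr rfl fun k _ => mul_comm _ _
  rw [hinst, hkron, hpt, Matrix.trace_smul]
  by_cases ht : (NormedSpace.exp ((-β : ℂ) • HS)).trace = 0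
  · simp only [gibbs, ht, _root_.inv_zero, zero_smul, smul_zero]
  · have htr1 : (gibbs HS β).trace = 1 := by
      simp only [gibbs, Matrix.trace_smul, smul_eq_mul]
      exact inv_mul_cancel₀ ht
    rw [htr1, smul_eq_mul, mul_one]
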